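/- arXiv:1304.0649 — 3 statements merged into one kernel-verified Lean document; each statement's English description precedes it below -/
import Mathlib

section
/- For every 0 < d < 1 the estimate of Theorem 1 is sharp: setting a := π(1−d²), S := [−a, a], Λ := ℤ, and f_j(x) := sin(a(x−j))/(π(x−j)) for j ∈ ℤ, each f_j belongs to PW_S, sup_j ‖f_j‖_{L²(ℝ)} < ∞, ‖f_j|_ℤ − δ_j‖_{ℓ²(ℤ)} = d for every j ∈ ℤ, and m(S) = 2π(1 − d²) D⁺(ℤ). -/
open MeasureTheory Filter

/-- A set `Λ ⊆ ℝ` is uniformly discrete if its points are separated by some `γ > 0`. -/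
def UniformlyDiscrete (Λ : Set ℝ) : Prop :=
  ∃ γ > (0 : ℝ), ∀ x ∈ Λ, ∀ y ∈ Λ, x ≠ y → γ ≤ |x - y|

/-- `f` belongs to the Paley–Wiener space `PW_S`: `f(x) = ∫_S F(t) e^{itx} dt`
for some `F ∈ L²(ℝ)` vanishing outside `S`. -/
def IsPaleyWiener (S : Set ℝ) (f : ℝ → ℂ) : Prop :=
  ∃ F : ℝ → ℂ, MemLp F 2 volume ∧ (∀ t ∉ S, F t = 0) ∧
    ∀ x : ℝ, f x = ∫ t in S, F t * Complex.exp (Complex.I * t * x)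

/-- Upper uniform (Beurling) density `D⁺(Λ)`. -/
noncomputable def upperUniformDensity (Λ : Set ℝ) : ℝ :=
  limsup (fun r : ℝ => ⨆ a : ℝ, ((Λ ∩ Set.Ioo a (a + r)).ncard : ℝ) / r) atTop


open Real in
private lemma aux_count_int (a b : ℝ) :
    ((Set.range ((↑) : ℤ → ℝ) ∩ Set.Ioo a b).ncard : ℝ) = ((⌈b⌉ - ⌊a⌋ - 1).toNat : ℝ) := by
  have h : Set.range ((↑) : ℤ → ℝ) ∩ Set.Ioo a b
      = ((↑) : ℤ → ℝ) '' (Set.Icc (⌊a⌋ + 1) (⌈b⌉ - 1)) := by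
    ext y
    constructor
    · rintro ⟨⟨n, rfl⟩, h1, h2⟩
      exact ⟨n, ⟨by rwa [Int.add_one_le_iff, Int.floor_lt],
        by rwa [Int.le_sub_one_iff, Int.lt_ceil]⟩, rfl⟩
    · rintro ⟨n, ⟨h1, h2⟩, rfl⟩
      exact ⟨⟨n, rfl⟩, Int.floor_lt.mp (by omega), Int.lt_ceil.mp (by omega)⟩
  rw [h, Set.ncard_image_of_injective _ Int.cast_injective, ← Finset.coe_Icc,
    Set.ncard_coe_finset, Int.card_Icc]
  congr 2
  omega

private lemma aux_toNat_cast_le (m : ℤ) {c : ℝ} (h : (m : ℝ) ≤ c) (hc : 0 ≤ c) :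
    ((m.toNat : ℕ) : ℝ) ≤ c := by
  rcases le_or_gt m 0 with h' | h'
  · simpa [Int.toNat_of_nonpos h'] using hc
  · have : ((m.toNat : ℕ) : ℝ) = ((m.toNat : ℤ) : ℝ) := by push_cast; ring
    rw [this, Int.toNat_of_nonneg h'.le]; exact h

private lemma aux_le_toNat_cast (m : ℤ) : (m : ℝ) ≤ ((m.toNat : ℕ) : ℝ) := by
  exact_mod_cast Int.self_le_toNat m

private lemma aux_tendsto (c : ℝ) : Tendsto (fun r : ℝ => (r + c) / r) atTop (nhds 1) := by
  have h : Tendsto (fun r : ℝ => 1 + c * r⁻¹) atTop (nhds (1 + c * 0)) :=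
    tendsto_const_nhds.add (tendsto_const_nhds.mul tendsto_inv_atTop_zero)
  rw [mul_zero, add_zero] at h
  apply h.congr'
  filter_upwards [eventually_gt_atTop (0 : ℝ)] with r hr
  field_simp

private lemma aux_density_int : upperUniformDensity (Set.range ((↑) : ℤ → ℝ)) = 1 := by
  apply Filter.Tendsto.limsup_eq
  apply tendsto_of_tendsto_of_tendsto_of_le_of_le'
    (g := fun r : ℝ => (r + (-1)) / r) (h := fun r : ℝ => (r + 2) / r)
    (aux_tendsto (-1)) (aux_tendsto 2)
  · filter_upwards [eventually_gt_atTop (1 : ℝ)] with r hr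
    have hr0 : (0 : ℝ) < r := by linarith
    have hub : ∀ x : ℝ,
        ((Set.range ((↑) : ℤ → ℝ) ∩ Set.Ioo x (x + r)).ncard : ℝ) / r ≤ (r + 2) / r := by
      intro x
      apply div_le_div_of_nonneg_right ?_ hr0.le |>.trans_eq rfl
      rw [aux_count_int]
      have h1 : ((⌈x + r⌉ : ℝ)) ≤ x + r + 1 := le_of_lt (Int.ceil_lt_add_one _)
      have h2 : x - 1 < (⌊x⌋ : ℝ) := Int.sub_one_lt_floor x
      exact aux_toNat_cast_le _ (by push_cast; linarith) (by linarith)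
    calc (r + (-1)) / r ≤ ((Set.range ((↑) : ℤ → ℝ) ∩ Set.Ioo 0 (0 + r)).ncard : ℝ) / r := by
          apply div_le_div_of_nonneg_right ?_ hr0.le |>.trans_eq rfl
          rw [aux_count_int]
          have h1 : (r : ℝ) ≤ (⌈(0:ℝ) + r⌉ : ℝ) := by simpa using Int.le_ceil ((0:ℝ) + r)
          have h2 : (⌊(0:ℝ)⌋ : ℝ) = 0 := by simp
          refine le_trans ?_ (aux_le_toNat_cast _)
          push_cast
          linarith
      _ ≤ ⨆ a : ℝ, ((Set.range ((↑) : ℤ → ℝ) ∩ Set.Ioo a (a + r)).ncard : ℝ) / r :=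
          le_ciSup ⟨(r + 2) / r, Set.forall_mem_range.mpr hub⟩ 0
  · filter_upwards [eventually_gt_atTop (1 : ℝ)] with r hr
    have hr0 : (0 : ℝ) < r := by linarith
    apply ciSup_le
    intro x
    apply div_le_div_of_nonneg_right ?_ hr0.le |>.trans_eq rfl
    rw [aux_count_int]
    have h1 : ((⌈x + r⌉ : ℝ)) ≤ x + r + 1 := le_of_lt (Int.ceil_lt_add_one _)
    have h2 : x - 1 < (⌊x⌋ : ℝ) := Int.sub_one_lt_floor x
    exact aux_toNat_cast_le _ (by push_cast; linarith) (by linarith)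

open Real in
private lemma aux_bernoulli_two_eval (x : ℝ) :
    (Polynomial.map (algebraMap ℚ ℝ) (Polynomial.bernoulli 2)).eval x = x ^ 2 - x + 1 / 6 := by
  simp [Polynomial.bernoulli, Finset.sum_range_succ, bernoulli_one,
    bernoulli_eq_bernoulli'_of_ne_one (by norm_num : (2:ℕ) ≠ 1), bernoulli'_two,
    Polynomial.map_monomial, Polynomial.eval_monomial]
  ring

open Real in
private lemma aux_cos_sum (x : ℝ) (hx : x ∈ Set.Icc (0:ℝ) 1) :
    HasSum (fun n : ℕ => 1 / (n : ℝ) ^ 2 * Real.cos (2 * π * n * x))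
      (π ^ 2 * (x ^ 2 - x + 1 / 6)) := by
  have h := hasSum_one_div_nat_pow_mul_cos one_ne_zero hx
  rw [show 2 * 1 = 2 from rfl, aux_bernoulli_two_eval] at h
  convert h using 1
  norm_num [Nat.factorial]
  exact Or.inl (by ring)

open Real in
private lemma aux_sinc_sq_sum (x : ℝ) (hx : x ∈ Set.Icc (0:ℝ) 1) :
    HasSum (fun n : ℕ => Real.sin (π * x * n) ^ 2 / (π * n) ^ 2) ((x - x ^ 2) / 2) := by
  have h := (hasSum_zeta_two.sub (aux_cos_sum x hx)).div_const (2 * π ^ 2)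
  have hπ : (π : ℝ) ≠ 0 := Real.pi_ne_zero
  have hfun : (fun n : ℕ => Real.sin (π * x * n) ^ 2 / (π * n) ^ 2)
      = fun n : ℕ =>
        (1 / (n : ℝ) ^ 2 - 1 / (n : ℝ) ^ 2 * Real.cos (2 * π * n * x)) / (2 * π ^ 2) := by
    funext n
    rcases Nat.eq_zero_or_pos n with rfl | hn
    · simp
    · have hn' : (n : ℝ) ≠ 0 := Nat.cast_ne_zero.mpr hn.ne'
      rw [Real.sin_sq_eq_half_sub, show 2 * (π * x * n) = 2 * π * n * x by ring]
      field_simp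
      try exact Or.inl (by ring)
  have hval : (x - x ^ 2) / 2 = (π ^ 2 / 6 - π ^ 2 * (x ^ 2 - x + 1 / 6)) / (2 * π ^ 2) := by
    field_simp
    ring
  rw [hfun, hval]
  exact h

open Real in
private lemma aux_int_sum (x : ℝ) (hx0 : 0 ≤ x) (hx1 : x ≤ 1) :
    HasSum (fun n : ℤ => if n = 0 then x ^ 2 else Real.sin (π * x * n) ^ 2 / (π * n) ^ 2) x := by
  have hs := aux_sinc_sq_sum x ⟨hx0, hx1⟩
  set f : ℤ → ℝ := fun n => if n = 0 then x ^ 2 else Real.sin (π * x * n) ^ 2 / (π * n) ^ 2 with hf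
  have hpos : HasSum (fun n : ℕ => f n) ((x - x ^ 2) / 2 + x ^ 2) := by
    have h1 := hs.add (hasSum_ite_eq 0 (x ^ 2))
    have he : (fun n : ℕ => f n)
        = fun n : ℕ => Real.sin (π * x * n) ^ 2 / (π * n) ^ 2 + (if n = 0 then x ^ 2 else 0) := by
      funext n
      rcases eq_or_ne n 0 with rfl | hn
      · norm_num [hf]
      · have h3 : (n : ℤ) ≠ 0 := by exact_mod_cast hn
        simp only [hf, if_neg h3, if_neg hn, add_zero, Int.cast_natCast]
    rw [he]
    exact h1
  have hneg : HasSum (fun n : ℕ => f (-((n : ℤ) + 1))) ((x - x ^ 2) / 2) := by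
    have h2 := (hasSum_nat_add_iff'
      (f := fun n : ℕ => Real.sin (π * x * n) ^ 2 / (π * n) ^ 2) 1).mpr hs
    simp only [Finset.range_one, Finset.sum_singleton, Nat.cast_zero, mul_zero, Real.sin_zero,
      zero_div, sub_zero, ne_eq, OfNat.ofNat_ne_zero, not_false_eq_true, zero_pow] at h2
    have he : (fun n : ℕ => f (-((n : ℤ) + 1)))
        = fun n : ℕ => Real.sin (π * x * (n + 1 : ℕ)) ^ 2 / (π * (n + 1 : ℕ)) ^ 2 := by
      funext n
      have h3 : (-((n : ℤ) + 1)) ≠ 0 := by omega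
      rw [hf]
      simp only [if_neg h3]
      push_cast
      rw [mul_neg, Real.sin_neg, mul_neg]
      ring
    rw [he]
    exact h2
  have h := hpos.of_nat_of_neg_add_one hneg
  convert h using 1
  ring

private noncomputable def auxFj (a : ℝ) (j : ℤ) : ℝ → ℂ := fun x =>
  if x = (j : ℝ) then ((a / Real.pi : ℝ) : ℂ)
  else ((Real.sin (a * (x - (j : ℝ))) / (Real.pi * (x - (j : ℝ))) : ℝ) : ℂ)

private lemma aux_meas_fj (a : ℝ) (j : ℤ) : AEStronglyMeasurable (auxFj a j) volume := by
  apply Measurable.aestronglyMeasurable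
  unfold auxFj
  apply Measurable.ite (measurableSet_eq)
  · fun_prop
  · fun_prop

open Real in
private lemma aux_norm_fj_le (a : ℝ) (ha : 0 < a) (ha' : a ≤ π) (j : ℤ) (x : ℝ) :
    ‖auxFj a j x‖ ≤ 1 ∧ ‖auxFj a j x‖ * |x - (j : ℝ)| ≤ 1 := by
  have hπ := Real.pi_pos
  have hπ3 := Real.pi_gt_three
  unfold auxFj
  rcases eq_or_ne x (j : ℝ) with rfl | hx
  · rw [if_pos rfl]
    have h1 : ‖((a / π : ℝ) : ℂ)‖ = a / π := by
      rw [Complex.norm_real, Real.norm_eq_abs, abs_of_pos (by positivity)]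
    rw [h1]
    constructor
    · rw [div_le_one hπ]; exact ha'
    · simp [sub_self]
  · rw [if_neg hx]
    have ht : x - (j : ℝ) ≠ 0 := sub_ne_zero.mpr hx
    have ht' : 0 < |x - (j : ℝ)| := abs_pos.mpr ht
    have h1 : ‖((Real.sin (a * (x - j)) / (π * (x - j)) : ℝ) : ℂ)‖
        = |Real.sin (a * (x - j))| / (π * |x - j|) := by
      rw [Complex.norm_real, Real.norm_eq_abs, abs_div, abs_mul, abs_of_pos hπ]
    rw [h1]
    constructor
    · have h2 : |Real.sin (a * (x - j))| ≤ |a * (x - j)| := Real.abs_sin_le_abs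
      rw [div_le_one (by positivity)]
      calc |Real.sin (a * (x - j))| ≤ |a * (x - j)| := h2
        _ = a * |x - j| := by rw [abs_mul, abs_of_pos ha]
        _ ≤ π * |x - j| := by nlinarith
    · have h2 : |Real.sin (a * (x - j))| ≤ 1 := Real.abs_sin_le_one _
      rw [div_mul_eq_mul_div, div_le_one (by positivity)]
      nlinarith

open Real in
private lemma aux_memL2_fj (a : ℝ) (ha : 0 < a) (ha' : a ≤ π) (j : ℤ) :
    MemLp (auxFj a j) 2 volume := by
  rw [memLp_two_iff_integrable_sq_norm (aux_meas_fj a j)]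
  have hint : Integrable (fun x : ℝ => 2 * (1 + (x - (j : ℝ)) ^ 2)⁻¹) volume :=
    (integrable_inv_one_add_sq.comp_sub_right ((j : ℝ))).const_mul 2
  apply hint.mono ((aux_meas_fj a j).norm.pow 2)
  filter_upwards with x
  obtain ⟨hb1, hb2⟩ := aux_norm_fj_le a ha ha' j x
  have hn : (0:ℝ) ≤ ‖auxFj a j x‖ := norm_nonneg _
  have hpos : (0:ℝ) < 1 + (x - (j:ℝ))^2 := by positivity
  rw [Real.norm_eq_abs, abs_of_nonneg (sq_nonneg _), Real.norm_eq_abs,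
    abs_of_nonneg (by positivity)]
  have e1 : ‖auxFj a j x‖ ^ 2 ≤ 1 := by nlinarith
  have hp : (0:ℝ) ≤ ‖auxFj a j x‖ * |x - (j:ℝ)| := mul_nonneg hn (abs_nonneg _)
  have hp2 : (‖auxFj a j x‖ * |x - (j:ℝ)|) ^ 2 ≤ 1 := by nlinarith
  have e2 : ‖auxFj a j x‖ ^ 2 * (x - (j:ℝ)) ^ 2 ≤ 1 := by
    calc ‖auxFj a j x‖ ^ 2 * (x - (j:ℝ)) ^ 2 = (‖auxFj a j x‖ * |x - (j:ℝ)|) ^ 2 := by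
          rw [mul_pow, sq_abs]
      _ ≤ 1 := hp2
  simp only [Pi.pow_apply]
  have hdiv : (2:ℝ) * (1 + (x - (j:ℝ))^2)⁻¹ = 2 / (1 + (x - (j:ℝ))^2) := by
    rw [div_eq_mul_inv]
  rw [hdiv, le_div_iff₀ hpos]
  nlinarith

private lemma aux_fj_eq_comp (a : ℝ) (j : ℤ) :
    auxFj a j = (auxFj a 0) ∘ (fun x : ℝ => x - (j : ℝ)) := by
  funext x
  simp only [Function.comp_apply, auxFj, Int.cast_zero, sub_zero, sub_eq_zero]

private lemma aux_eLpNorm_fj (a : ℝ) (j : ℤ) :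
    eLpNorm (auxFj a j) 2 volume = eLpNorm (auxFj a 0) 2 volume := by
  rw [aux_fj_eq_comp a j]
  exact eLpNorm_comp_measurePreserving (aux_meas_fj a 0)
    (measurePreserving_sub_right volume ((j:ℝ)))

private lemma aux_key_exp (w : ℂ) :
    Complex.exp (w * Complex.I) - Complex.exp (-(w * Complex.I))
      = 2 * Complex.I * Complex.sin w := by
  rw [Complex.sin, neg_mul]
  linear_combination (Complex.exp (w * Complex.I) - Complex.exp (-(w * Complex.I)))
    * Complex.I_mul_I

open Real in
private lemma aux_pw_fj (a : ℝ) (ha : 0 < a) (j : ℤ) :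
    IsPaleyWiener (Set.Icc (-a) a) (auxFj a j) := by
  have hπ := Real.pi_pos
  set G : ℝ → ℂ := fun t => Complex.exp (-(Complex.I * t * ((j : ℝ) : ℂ))) / (2 * Real.pi)
    with hG
  have hGnorm : ∀ t : ℝ, ‖G t‖ = 1 / (2 * Real.pi) := by
    intro t
    rw [hG]
    simp only
    rw [norm_div, show (-(Complex.I * (t:ℂ) * ((j:ℝ):ℂ))) = ((-(t * (j:ℝ)) : ℝ) : ℂ) * Complex.I
        by push_cast; ring, Complex.norm_exp_ofReal_mul_I,
      show ((2:ℂ) * ((Real.pi : ℝ):ℂ)) = (((2 * Real.pi : ℝ)):ℂ) by push_cast; ring,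
      Complex.norm_real, Real.norm_eq_abs, abs_of_pos (by positivity)]
  have hGcont : Continuous G := by fun_prop
  refine ⟨Set.indicator (Set.Icc (-a) a) G, ?_, ?_, ?_⟩
  · rw [memLp_indicator_iff_restrict measurableSet_Icc]
    apply MemLp.of_bound (hGcont.aestronglyMeasurable.restrict) (1 / (2 * Real.pi))
    filter_upwards with t
    exact le_of_eq (hGnorm t)
  · intro t ht
    exact Set.indicator_of_notMem ht _
  · intro x
    have hle : -a ≤ a := by linarith
    have step1 : (∫ t in Set.Icc (-a) a, Set.indicator (Set.Icc (-a) a) G t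
        * Complex.exp (Complex.I * t * x))
        = ∫ t in Set.Icc (-a) a,
            Complex.exp ((Complex.I * ((x - (j:ℝ) : ℝ) : ℂ)) * t) / (2 * Real.pi) := by
      apply setIntegral_congr_fun measurableSet_Icc
      intro t ht
      simp only [Set.indicator_of_mem ht, hG]
      rw [div_mul_eq_mul_div, ← Complex.exp_add]
      congr 2
      push_cast
      ring
    rw [step1, integral_Icc_eq_integral_Ioc,
      ← intervalIntegral.integral_of_le hle, intervalIntegral.integral_div]
    rcases eq_or_ne x (j : ℝ) with hx | hx
    · rw [hx]
      simp only [sub_self, Complex.ofReal_zero, mul_zero, zero_mul, Complex.exp_zero]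
      rw [intervalIntegral.integral_const]
      rw [auxFj, if_pos rfl]
      push_cast
      rw [Complex.real_smul]
      push_cast
      have hπc : ((Real.pi : ℝ) : ℂ) ≠ 0 := by exact_mod_cast Real.pi_ne_zero
      field_simp
      ring
    · have hxj : ((x - (j:ℝ) : ℝ) : ℂ) ≠ 0 := by
        exact_mod_cast sub_ne_zero.mpr hx
      have hc : Complex.I * ((x - (j:ℝ) : ℝ) : ℂ) ≠ 0 := mul_ne_zero Complex.I_ne_zero hxj
      rw [integral_exp_mul_complex hc]
      rw [auxFj, if_neg hx]
      have e1 : Complex.I * ((x - (j:ℝ) : ℝ) : ℂ) * ((a : ℝ) : ℂ)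
          = ((a * (x - (j:ℝ)) : ℝ) : ℂ) * Complex.I := by push_cast; ring
      have e2 : Complex.I * ((x - (j:ℝ) : ℝ) : ℂ) * ((-a : ℝ) : ℂ)
          = -(((a * (x - (j:ℝ)) : ℝ) : ℂ) * Complex.I) := by push_cast; ring
      rw [e1, e2, aux_key_exp]
      have hπc : ((Real.pi : ℝ) : ℂ) ≠ 0 := by exact_mod_cast Real.pi_ne_zero
      have hden : ((Real.pi * (x - (j:ℝ)) : ℝ) : ℂ) ≠ 0 := by
        exact_mod_cast mul_ne_zero Real.pi_ne_zero (sub_ne_zero.mpr hx)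
      have hden2 : Complex.I * ((x - (j:ℝ) : ℝ) : ℂ) * (2 * ((Real.pi : ℝ) : ℂ)) ≠ 0 :=
        mul_ne_zero hc (by simpa using hπc)
      rw [show ((Real.sin (a * (x - (j:ℝ))) / (Real.pi * (x - (j:ℝ))) : ℝ) : ℂ)
          = Complex.sin (((a * (x - (j:ℝ)) : ℝ) : ℂ)) / (((Real.pi * (x - (j:ℝ)) : ℝ)) : ℂ) by
        rw [Complex.ofReal_div, Complex.ofReal_sin]]
      rw [div_div, div_eq_div_iff hden hden2]
      push_cast
      ring

/-- **Sharpness of Theorem 1.** For `a := π(1−d²)`, `S := [−a,a]`, `Λ := ℤ` and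
`f_j(x) := sin(a(x−j))/(π(x−j))`, the hypotheses of Theorem 1 hold with equality:
`‖f_j|_ℤ − δ_j‖²_{ℓ²} = d²` and `m(S) = 2π(1−d²) D⁺(ℤ)`. -/
theorem sharpness_of_measure_bound (d : ℝ) (hd0 : 0 < d) (hd1 : d < 1) :
    let a : ℝ := Real.pi * (1 - d ^ 2)
    let S : Set ℝ := Set.Icc (-a) a
    let f : ℤ → ℝ → ℂ := fun j x =>
      if x = (j : ℝ) then ((a / Real.pi : ℝ) : ℂ)
      else ((Real.sin (a * (x - (j : ℝ))) / (Real.pi * (x - (j : ℝ))) : ℝ) : ℂ)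
    (∀ j : ℤ, IsPaleyWiener S (f j)) ∧
    (∃ M : ℝ, ∀ j : ℤ, eLpNorm (f j) 2 volume ≤ ENNReal.ofReal M) ∧
    (∀ j : ℤ,
      Summable (fun k : ℤ => ‖f j (k : ℝ) - (if k = j then 1 else 0)‖ ^ 2) ∧
      ∑' k : ℤ, ‖f j (k : ℝ) - (if k = j then 1 else 0)‖ ^ 2 = d ^ 2) ∧
    (volume S).toReal
      = 2 * Real.pi * (1 - d ^ 2) * upperUniformDensity (Set.range ((↑) : ℤ → ℝ)) := by
  intro a S f
  have hadef : a = Real.pi * (1 - d ^ 2) := rfl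
  have hd2 : d ^ 2 < 1 := by nlinarith
  have hd2' : (0:ℝ) < d ^ 2 := by positivity
  have ha0 : 0 < a := by rw [hadef]; have := Real.pi_pos; nlinarith
  have ha' : a ≤ Real.pi := by rw [hadef]; have := Real.pi_pos; nlinarith
  have hπ := Real.pi_pos
  have hf : f = fun j => auxFj a j := rfl
  refine ⟨fun j => ?_, ⟨(eLpNorm (auxFj a 0) 2 volume).toReal, fun j => ?_⟩, fun j => ?_, ?_⟩
  · rw [hf]
    exact aux_pw_fj a ha0 j
  · rw [hf]
    simp only
    rw [aux_eLpNorm_fj a j, ENNReal.ofReal_toReal (aux_memL2_fj a ha0 ha' 0).2.ne]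
  · -- the ℓ² identity
    have hterm : ∀ k : ℤ, ‖f j (k : ℝ) - (if k = j then 1 else 0)‖ ^ 2
        = (if (k - j : ℤ) = 0 then (d ^ 2) ^ 2
          else Real.sin (Real.pi * d ^ 2 * ((k - j : ℤ) : ℝ)) ^ 2
            / (Real.pi * ((k - j : ℤ) : ℝ)) ^ 2) := by
      intro k
      rw [hf]
      simp only [auxFj]
      rcases eq_or_ne k j with rfl | hk
      · rw [if_pos rfl, if_pos rfl, sub_self, if_pos rfl]
        have h1 : (a / Real.pi : ℝ) = 1 - d ^ 2 := by rw [hadef]; field_simp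
        rw [h1, show (((1 - d ^ 2 : ℝ)) : ℂ) - 1 = ((-(d ^ 2) : ℝ) : ℂ) by push_cast; ring,
          Complex.norm_real, Real.norm_eq_abs, abs_neg, abs_of_nonneg (sq_nonneg d)]
      · have hk' : (k : ℝ) ≠ (j : ℝ) := by exact_mod_cast hk
        rw [if_neg hk', if_neg hk, if_neg (sub_ne_zero.mpr hk), sub_zero,
          Complex.norm_real, Real.norm_eq_abs, sq_abs]
        have hcast : ((k - j : ℤ) : ℝ) = (k : ℝ) - (j : ℝ) := by push_cast; ring
        rw [hcast, div_pow]
        congr 1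
        rw [show a * ((k : ℝ) - (j : ℝ))
            = ((k - j : ℤ) : ℝ) * Real.pi - Real.pi * d ^ 2 * ((k : ℝ) - (j : ℝ)) by
          rw [hadef, hcast]; ring, Real.sin_int_mul_pi_sub]
        have habs : ((-1 : ℝ) ^ (k - j)) ^ 2 = 1 := by
          rcases Int.even_or_odd (k - j) with he | ho
          · rw [he.neg_one_zpow]; norm_num
          · rw [ho.neg_one_zpow]; norm_num
        calc (-((-1 : ℝ) ^ (k - j) * Real.sin (Real.pi * d ^ 2 * ((k:ℝ) - (j:ℝ))))) ^ 2
            = ((-1 : ℝ) ^ (k - j)) ^ 2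
              * Real.sin (Real.pi * d ^ 2 * ((k:ℝ) - (j:ℝ))) ^ 2 := by ring
          _ = Real.sin (Real.pi * d ^ 2 * ((k:ℝ) - (j:ℝ))) ^ 2 := by
              rw [habs, one_mul]
    have hsum := aux_int_sum (d ^ 2) (sq_nonneg d) hd2.le
    have hcomp : HasSum ((fun n : ℤ => if n = 0 then (d ^ 2) ^ 2
        else Real.sin (Real.pi * d ^ 2 * n) ^ 2 / (Real.pi * n) ^ 2)
          ∘ (Equiv.subRight j)) (d ^ 2) :=
      (Equiv.hasSum_iff (Equiv.subRight j)).mpr hsum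
    have hfun : (fun k : ℤ => ‖f j (k : ℝ) - (if k = j then 1 else 0)‖ ^ 2)
        = (fun n : ℤ => if n = 0 then (d ^ 2) ^ 2
            else Real.sin (Real.pi * d ^ 2 * n) ^ 2 / (Real.pi * n) ^ 2)
          ∘ (Equiv.subRight j) := by
      funext k
      simp only [Function.comp_apply, Equiv.subRight_apply]
      exact hterm k
    rw [hfun]
    exact ⟨hcomp.summable, hcomp.tsum_eq⟩
  · show (volume (Set.Icc (-a) a)).toReal = _
    rw [Real.volume_Icc, aux_density_int, ENNReal.toReal_ofReal (by linarith)]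
    rw [hadef]
    ring
end

section
/- Let 0 < d < 1 and let {u_j}, 1 ≤ j ≤ n, be an orthonormal basis of the n-dimensional complex Euclidean space ℂⁿ. Suppose {v_j}, 1 ≤ j ≤ n, are vectors in ℂⁿ satisfying ‖v_j − u_j‖ ≤ d for j = 1, …, n. Then for every α with 1 < α < 1/d there is a linear subspace X ⊆ ℂⁿ such that (i) dim X > (1 − α²d²)n − 1, and (ii) ‖Σ_{j=1}^n c_j v_j‖² ≥ (1 − 1/α)² Σ_{j=1}^n |c_j|² for every vector c = (c_1, …, c_n) ∈ X. -/
open Finset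
open scoped InnerProductSpace ComplexConjugate

noncomputable def EKW {n : ℕ} (w : Fin n → EuclideanSpace ℂ (Fin n)) :
    EuclideanSpace ℂ (Fin n) →ₗ[ℂ] EuclideanSpace ℂ (Fin n) where
  toFun c := ∑ j, c j • w j
  map_add' a b := by
    simp [add_smul, Finset.sum_add_distrib]
  map_smul' r a := by
    simp [smul_smul, Finset.smul_sum]

lemma EKW_single {n : ℕ} (w : Fin n → EuclideanSpace ℂ (Fin n)) (j : Fin n) :
    EKW w (EuclideanSpace.single j 1) = w j := by
  simp only [EKW, LinearMap.coe_mk, AddHom.coe_mk]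
  rw [Finset.sum_eq_single j]
  · simp
  · intro k _ hk; simp [EuclideanSpace.single_apply, hk]
  · simp

lemma parsevalKW {n : ℕ} (w : OrthonormalBasis (Fin n) ℂ (EuclideanSpace ℂ (Fin n)))
    (x : EuclideanSpace ℂ (Fin n)) :
    ‖x‖ ^ 2 = ∑ i, ‖(⟪w i, x⟫_ℂ)‖ ^ 2 := by
  have h1 : ‖x‖ = ‖w.repr x‖ := (w.repr.norm_map x).symm
  rw [h1, EuclideanSpace.norm_eq, Real.sq_sqrt (by positivity)]
  simp_rw [w.repr_apply_apply]

lemma hsKW {n : ℕ} (E : EuclideanSpace ℂ (Fin n) →ₗ[ℂ] EuclideanSpace ℂ (Fin n))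
    (b b' : OrthonormalBasis (Fin n) ℂ (EuclideanSpace ℂ (Fin n))) :
    ∑ i, ‖E (b i)‖ ^ 2 = ∑ j, ‖LinearMap.adjoint E (b' j)‖ ^ 2 := by
  have key : ∀ i, ‖E (b i)‖ ^ 2 = ∑ j, ‖(⟪b i, LinearMap.adjoint E (b' j)⟫_ℂ)‖ ^ 2 := by
    intro i
    rw [parsevalKW b' (E (b i))]
    congr 1; ext j
    rw [LinearMap.adjoint_inner_right, norm_inner_symm]
  simp_rw [key]
  rw [Finset.sum_comm]
  congr 1; ext j
  exact (parsevalKW b (LinearMap.adjoint E (b' j))).symm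

lemma hsKW' {n : ℕ} (E : EuclideanSpace ℂ (Fin n) →ₗ[ℂ] EuclideanSpace ℂ (Fin n))
    (b b' : OrthonormalBasis (Fin n) ℂ (EuclideanSpace ℂ (Fin n))) :
    ∑ i, ‖E (b i)‖ ^ 2 = ∑ j, ‖E (b' j)‖ ^ 2 := by
  rw [hsKW E b b', hsKW (LinearMap.adjoint E) b' b']
  simp

/-- **Lemma 2 (Kolmogorov width type estimate).** If vectors `v_j` in `ℂⁿ` satisfy
`‖v_j − u_j‖ ≤ d` for an orthonormal basis `{u_j}`, then for every `1 < α < 1/d` there is a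
subspace `X ⊆ ℂⁿ` with `dim X > (1 − α²d²)n − 1` on which
`‖Σ c_j v_j‖² ≥ (1 − 1/α)² Σ |c_j|²`. -/
theorem exists_subspace_quadratic_bound (n : ℕ) (d : ℝ) (hd0 : 0 < d) (hd1 : d < 1)
    (u : OrthonormalBasis (Fin n) ℂ (EuclideanSpace ℂ (Fin n)))
    (v : Fin n → EuclideanSpace ℂ (Fin n))
    (hv : ∀ j : Fin n, ‖v j - u j‖ ≤ d)
    (α : ℝ) (hα1 : 1 < α) (hα2 : α < 1 / d) :
    ∃ X : Submodule ℂ (EuclideanSpace ℂ (Fin n)),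
      (1 - α ^ 2 * d ^ 2) * (n : ℝ) - 1 < (Module.finrank ℂ X : ℝ) ∧
      ∀ c ∈ X, (1 - 1 / α) ^ 2 * ∑ j : Fin n, ‖c j‖ ^ 2 ≤ ‖∑ j : Fin n, c j • v j‖ ^ 2 := by
  have hα0 : (0:ℝ) < α := lt_trans one_pos hα1
  set E := EKW (fun j => v j - u j) with hE
  set T := LinearMap.adjoint E * E with hT
  have hTs : T.IsSymmetric := LinearMap.isSymmetric_adjoint_mul_self E
  have hn : Module.finrank ℂ (EuclideanSpace ℂ (Fin n)) = n := finrank_euclideanSpace_fin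
  set w := hTs.eigenvectorBasis hn with hw
  set μ := hTs.eigenvalues hn with hμ
  have happ : ∀ i, T (w i) = (μ i : ℂ) • w i := fun i => hTs.apply_eigenvectorBasis hn i
  have hinner : ∀ (x : EuclideanSpace ℂ (Fin n)), (⟪x, T x⟫_ℂ) = (‖E x‖^2 : ℝ) := by
    intro x
    have h0 : T x = LinearMap.adjoint E (E x) := rfl
    rw [h0, LinearMap.adjoint_inner_right, inner_self_eq_norm_sq_to_K]
    norm_num
  have hμval : ∀ i, μ i = ‖E (w i)‖ ^ 2 := by
    intro i
    have h1 : (⟪w i, T (w i)⟫_ℂ) = (μ i : ℂ) := by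
      rw [happ i, inner_smul_right, inner_self_eq_norm_sq_to_K, w.orthonormal.1 i]
      norm_num
    have h2 := (hinner (w i)).symm.trans h1
    exact_mod_cast h2.symm
  have hμnn : ∀ i, 0 ≤ μ i := fun i => (hμval i) ▸ sq_nonneg _
  -- sum of eigenvalues ≤ n d²
  have hsum : ∑ i, μ i ≤ (n : ℝ) * d ^ 2 := by
    have h1 : ∑ i, μ i = ∑ i, ‖E (w i)‖ ^ 2 := by simp_rw [hμval]
    have h2 : ∑ i, ‖E (w i)‖ ^ 2 = ∑ j, ‖E ((EuclideanSpace.basisFun (Fin n) ℂ) j)‖ ^ 2 :=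
      hsKW' E w (EuclideanSpace.basisFun (Fin n) ℂ)
    have h3 : ∀ j, E ((EuclideanSpace.basisFun (Fin n) ℂ) j) = v j - u j := by
      intro j
      rw [EuclideanSpace.basisFun_apply]
      exact EKW_single _ j
    rw [h1, h2]
    simp_rw [h3]
    calc ∑ j, ‖v j - u j‖ ^ 2 ≤ ∑ _j : Fin n, d ^ 2 := by
          apply Finset.sum_le_sum
          intro j _
          exact pow_le_pow_left₀ (norm_nonneg _) (hv j) 2
      _ = (n : ℝ) * d ^ 2 := by simp [mul_comm]
  classical
  set s : Finset (Fin n) := Finset.univ.filter (fun i => α⁻¹ ^ 2 < μ i) with hs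
  have hcard : (s.card : ℝ) ≤ α ^ 2 * d ^ 2 * n := by
    have h1 : (s.card : ℝ) * α⁻¹ ^ 2 ≤ ∑ i ∈ s, μ i := by
      have h := Finset.card_nsmul_le_sum s μ (α⁻¹ ^ 2)
        (fun i hi => le_of_lt (by simpa [hs] using hi))
      simpa [nsmul_eq_mul] using h
    have h2 : ∑ i ∈ s, μ i ≤ ∑ i, μ i :=
      Finset.sum_le_sum_of_subset_of_nonneg (Finset.subset_univ s) (fun i _ _ => hμnn i)
    have h3 : (s.card : ℝ) * α⁻¹ ^ 2 ≤ (n:ℝ) * d ^ 2 := by linarith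
    have h4 : (s.card : ℝ) = ((s.card : ℝ) * α⁻¹ ^ 2) * α ^ 2 := by
      field_simp
    rw [h4]
    calc ((s.card : ℝ) * α⁻¹ ^ 2) * α ^ 2 ≤ ((n:ℝ) * d ^ 2) * α ^ 2 :=
          mul_le_mul_of_nonneg_right h3 (by positivity)
      _ = α ^ 2 * d ^ 2 * n := by ring
  -- the subspace
  refine ⟨Submodule.span ℂ (Set.range (fun i : ↥(sᶜ) => w i)), ?_, ?_⟩
  · -- dimension bound
    have hind : LinearIndependent ℂ (fun i : ↥(sᶜ) => w i) :=
      (w.orthonormal.comp _ Subtype.coe_injective).linearIndependent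
    have hfr : Module.finrank ℂ (Submodule.span ℂ (Set.range (fun i : ↥(sᶜ) => w i)))
        = (sᶜ : Finset (Fin n)).card := by
      rw [finrank_span_eq_card hind, Fintype.card_coe]
    rw [hfr]
    have hcompl : ((sᶜ : Finset (Fin n)).card : ℝ) = (n : ℝ) - s.card := by
      rw [Finset.card_compl]
      have : s.card ≤ Fintype.card (Fin n) := Finset.card_le_univ s
      push_cast [Nat.cast_sub this]
      simp
    rw [hcompl]
    linarith
  · -- the estimate
    intro c hc
    -- inner products with eigenvectors in s vanish
    have hzero : ∀ i ∈ s, (⟪w i, c⟫_ℂ) = 0 := by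
      intro i hi
      induction hc using Submodule.span_induction with
      | mem x hx =>
        obtain ⟨j, rfl⟩ := hx
        apply w.orthonormal.2
        intro hij
        rw [hij] at hi
        exact absurd hi (Finset.mem_compl.mp j.2)
      | zero => simp
      | add x y _ _ hx hy => rw [inner_add_right, hx, hy, add_zero]
      | smul r x _ hx => rw [inner_smul_right, hx, mul_zero]
    -- ‖E c‖² = ∑ μ_i ‖repr c i‖²
    have hEc2 : ‖E c‖ ^ 2 = ∑ i, μ i * ‖w.repr c i‖ ^ 2 := by
      have h1 : ((‖E c‖ ^ 2 : ℝ) : ℂ) = ⟪c, T c⟫_ℂ := (hinner c).symm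
      have h2 : (⟪c, T c⟫_ℂ) = ⟪w.repr c, w.repr (T c)⟫_ℂ := (w.repr.inner_map_map c (T c)).symm
      have h3 : (⟪w.repr c, w.repr (T c)⟫_ℂ) = ∑ i, conj (w.repr c i) * (w.repr (T c) i) := by
        rw [PiLp.inner_apply]; refine Finset.sum_congr rfl fun i _ => ?_; simp [RCLike.inner_apply, mul_comm]
      have h4 : ∀ i, w.repr (T c) i = (μ i : ℂ) * w.repr c i := fun i =>
        hTs.eigenvectorBasis_apply_self_apply hn c i
      have h5 : ((‖E c‖ ^ 2 : ℝ) : ℂ) = ∑ i, ((μ i : ℝ) : ℂ) * ((‖w.repr c i‖ ^ 2 : ℝ) : ℂ) := by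
        rw [h1, h2, h3]
        congr 1; ext i
        rw [h4 i]
        rw [mul_comm (conj (w.repr c i)) _, mul_assoc, RCLike.mul_conj]
        simp [Complex.ofReal_mul, RCLike.ofReal_mul]
      have h6 : ((‖E c‖ ^ 2 : ℝ) : ℂ) = ((∑ i, μ i * ‖w.repr c i‖ ^ 2 : ℝ) : ℂ) := by
        rw [h5]; push_cast; ring
      exact_mod_cast h6
    -- bound ‖E c‖² ≤ α⁻² ‖c‖²
    have hEcb : ‖E c‖ ^ 2 ≤ α⁻¹ ^ 2 * ‖c‖ ^ 2 := by
      rw [hEc2]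
      have hnorm : ‖c‖ ^ 2 = ∑ i, ‖w.repr c i‖ ^ 2 := by
        simp_rw [w.repr_apply_apply]
        exact parsevalKW w c
      rw [hnorm, Finset.mul_sum]
      apply Finset.sum_le_sum
      intro i _
      by_cases hi : i ∈ s
      · have : w.repr c i = 0 := by rw [w.repr_apply_apply]; exact hzero i hi
        simp [this]
      · have hle : μ i ≤ α⁻¹ ^ 2 := by
          by_contra h
          push_neg at h
          exact hi (Finset.mem_filter.mpr ⟨Finset.mem_univ i, h⟩)
        exact mul_le_mul_of_nonneg_right hle (sq_nonneg _)
    have hEcle : ‖E c‖ ≤ α⁻¹ * ‖c‖ := by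
      have h : ‖E c‖ ^ 2 ≤ (α⁻¹ * ‖c‖) ^ 2 := by rw [mul_pow]; exact hEcb
      exact le_of_pow_le_pow_left₀ two_ne_zero (by positivity) h
    -- decomposition
    have hsplit : ∑ j, c j • v j = (∑ j, c j • u j) + E c := by
      have h0 : E c = ∑ j, c j • (v j - u j) := rfl
      rw [h0, ← Finset.sum_add_distrib]
      apply Finset.sum_congr rfl
      intro j _
      rw [smul_sub]
      abel
    have hU : ‖∑ j, c j • u j‖ = ‖c‖ := by
      rw [u.sum_repr_symm c]
      exact u.repr.symm.norm_map c
    have hlow : (1 - 1/α) * ‖c‖ ≤ ‖∑ j, c j • v j‖ := by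
      have h1 : ‖∑ j, c j • u j‖ ≤ ‖∑ j, c j • v j‖ + ‖E c‖ := by
        have := norm_sub_le (∑ j, c j • v j) (E c)
        rw [hsplit] at this ⊢
        simpa using this
      rw [hU] at h1
      have h2 : α⁻¹ * ‖c‖ = (1/α) * ‖c‖ := by rw [one_div]
      nlinarith [hEcle, norm_nonneg c]
    have hc2 : ∑ j, ‖c j‖ ^ 2 = ‖c‖ ^ 2 := by
      rw [EuclideanSpace.norm_eq, Real.sq_sqrt (by positivity)]
    rw [hc2]
    have h1a : (0:ℝ) ≤ 1 - 1/α := by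
      have : 1/α < 1 := by rw [div_lt_one hα0]; exact hα1
      linarith
    calc (1 - 1/α) ^ 2 * ‖c‖ ^ 2 = ((1 - 1/α) * ‖c‖) ^ 2 := by ring
      _ ≤ ‖∑ j, c j • v j‖ ^ 2 :=
          pow_le_pow_left₀ (by positivity) hlow 2
end

section
/- For every δ > 0 and every β with 0 < β < 1 there exist a constant C > 0 and a function ψ ∈ PW_{[−δ,δ]} (the continuous representative) such that ψ(0) = 1, |ψ(x)| ≤ 1 for all x ∈ ℝ, and |ψ(x)| ≤ C e^{−|x|^β} for all x ∈ ℝ. -/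
open MeasureTheory Filter
open scoped Topology

set_option linter.unusedSectionVars false

namespace SubexpPW

noncomputable def FF (a : ℕ → ℝ) : ℕ → ℝ → ℝ
  | 0 => (Set.Icc (-(a 0)) (a 0)).indicator fun _ => (2 * a 0)⁻¹
  | (n+1) => fun t => (2 * a (n+1))⁻¹ * ∫ s in Set.Icc (-(a (n+1))) (a (n+1)), FF a n (t - s)

noncomputable def cc (a : ℕ → ℝ) (k : ℕ) (x : ℝ) : ℂ :=
  (((2 * a k)⁻¹ : ℝ) : ℂ) * ∫ s in Set.Icc (-(a k)) (a k), Complex.exp (Complex.I * s * x)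

noncomputable def PP (a : ℕ → ℝ) (n : ℕ) (x : ℝ) : ℂ :=
  ∫ t : ℝ, (FF a n t : ℂ) * Complex.exp (Complex.I * t * x)

def SS (a : ℕ → ℝ) (n : ℕ) : ℝ := ∑ k ∈ Finset.range (n+1), a k

variable {a : ℕ → ℝ}

lemma ff_meas (n : ℕ) : Measurable (FF a n) := by
  induction n with
  | zero => exact measurable_const.indicator measurableSet_Icc
  | succ n ih =>
      refine Measurable.const_mul ?_ _
      have h : Measurable (Function.uncurry fun t s : ℝ => FF a n (t - s)) :=
        ih.comp (measurable_fst.sub measurable_snd)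
      exact (h.stronglyMeasurable.integral_prod_right').measurable

variable (ha : ∀ k, 0 < a k)
include ha

lemma ff_nonneg (n : ℕ) (t : ℝ) : 0 ≤ FF a n t := by
  induction n generalizing t with
  | zero =>
      have h0 := ha 0
      exact Set.indicator_nonneg (fun _ _ => by positivity) t
  | succ n ih =>
      have h0 := ha (n+1)
      exact mul_nonneg (by positivity) (integral_nonneg fun s => ih _)

lemma ff_le (n : ℕ) (t : ℝ) : FF a n t ≤ (2 * a 0)⁻¹ := by
  induction n generalizing t with
  | zero =>
      have h0 := ha 0
      exact Set.indicator_le_self' (fun _ _ => by positivity) t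
  | succ n ih =>
      have hpos : 0 < a (n+1) := ha _
      have h00 : 0 < a 0 := ha 0
      show (2 * a (n+1))⁻¹ * ∫ s in Set.Icc (-(a (n+1))) (a (n+1)), FF a n (t - s) ≤ _
      have hint : IntegrableOn (fun s => FF a n (t - s))
          (Set.Icc (-(a (n+1))) (a (n+1))) volume := by
        refine Integrable.mono' (g := fun _ => (2 * a 0)⁻¹)
          (integrableOn_const measure_Icc_lt_top.ne) ?_ ?_
        · exact ((ff_meas n).comp (measurable_const.sub measurable_id)).aestronglyMeasurable
        · filter_upwards with s
          rw [Real.norm_eq_abs, abs_of_nonneg (ff_nonneg ha n _)]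
          exact ih _
      have hle : (∫ s in Set.Icc (-(a (n+1))) (a (n+1)), FF a n (t - s)) ≤
          ∫ s in Set.Icc (-(a (n+1))) (a (n+1)), (2 * a 0)⁻¹ := by
        refine setIntegral_mono_on hint
          (integrableOn_const measure_Icc_lt_top.ne) measurableSet_Icc ?_
        exact fun s _ => ih _
      rw [setIntegral_const] at hle
      have hvol : (volume (Set.Icc (-(a (n+1))) (a (n+1)))).toReal = 2 * a (n+1) := by
        rw [Real.volume_Icc, ENNReal.toReal_ofReal (by linarith)]; ring
      rw [measureReal_def, hvol, smul_eq_mul] at hle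
      calc (2 * a (n+1))⁻¹ * ∫ s in Set.Icc (-(a (n+1))) (a (n+1)), FF a n (t - s)
          ≤ (2 * a (n+1))⁻¹ * (2 * a (n+1) * (2 * a 0)⁻¹) :=
            mul_le_mul_of_nonneg_left hle (by positivity)
        _ = (2 * a 0)⁻¹ := by field_simp

lemma ff_supp (n : ℕ) (t : ℝ) (h : SS a n < |t|) : FF a n t = 0 := by
  induction n generalizing t with
  | zero =>
      refine Set.indicator_of_notMem ?_ _
      have h' : a 0 < |t| := by simpa [SS] using h
      intro hmem
      rcases hmem with ⟨h1, h2⟩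
      rcases abs_cases t with ⟨he, _⟩ | ⟨he, _⟩ <;> linarith
  | succ n ih =>
      have hz : ∀ s ∈ Set.Icc (-(a (n+1))) (a (n+1)), FF a n (t - s) = 0 := by
        intro s hs
        refine ih _ ?_
        have hSS : SS a (n+1) = SS a n + a (n+1) := by
          simp [SS, Finset.sum_range_succ]
        have h1 : |t| - |s| ≤ |t - s| := by
          have := abs_sub_abs_le_abs_sub t s; linarith
        have hs' : |s| ≤ a (n+1) := abs_le.2 ⟨by linarith [hs.1], hs.2⟩
        rw [hSS] at h
        linarith
      show (2 * a (n+1))⁻¹ * _ = (0:ℝ)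
      rw [setIntegral_congr_fun measurableSet_Icc hz]
      simp


lemma ff_intOn (n : ℕ) (c d : ℝ) (g : ℝ → ℝ) (hg : Measurable g) :
    IntegrableOn (fun s => FF a n (g s)) (Set.Icc c d) volume := by
  refine Integrable.mono' (g := fun _ => (2 * a 0)⁻¹)
    (integrableOn_const measure_Icc_lt_top.ne) ?_ ?_
  · exact ((ff_meas n).comp hg).aestronglyMeasurable
  · filter_upwards with s
    rw [Real.norm_eq_abs, abs_of_nonneg (ff_nonneg ha n _)]
    exact ff_le ha n _

lemma ff_integrable (n : ℕ) : Integrable (FF a n) volume := by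
  have hsub : Function.support (FF a n) ⊆ Set.Icc (-(SS a n)) (SS a n) := by
    intro t ht
    by_contra hmem
    refine ht (ff_supp ha n t ?_)
    rcases abs_cases t with ⟨he, _⟩ | ⟨he, _⟩ <;>
      (simp only [Set.mem_Icc, not_and_or, not_le] at hmem; rcases hmem with h | h <;> linarith)
  rw [← Set.indicator_eq_self.2 hsub]
  rw [integrable_indicator_iff measurableSet_Icc]
  exact ff_intOn ha n _ _ id measurable_id

/-- Uniform Lipschitz constant for all `FF a (n+1)`. -/
noncomputable def KK (a : ℕ → ℝ) : ℝ := (2 * a 1)⁻¹ * (2 * (2 * a 0)⁻¹)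

lemma ff_lip (n : ℕ) (t t' : ℝ) :
    |FF a (n+1) t - FF a (n+1) t'| ≤ KK a * |t - t'| := by
  induction n generalizing t t' with
  | zero =>
      have h1 : 0 < a 1 := ha 1
      have h0 : 0 < a 0 := ha 0
      have key : ∀ u : ℝ, FF a 1 u = (2 * a 1)⁻¹ * ∫ v in (u - a 1)..(u + a 1), FF a 0 v := by
        intro u
        show (2 * a 1)⁻¹ * _ = _
        congr 1
        rw [MeasureTheory.integral_Icc_eq_integral_Ioc,
          ← intervalIntegral.integral_of_le (by linarith : -(a 1) ≤ a 1),
          intervalIntegral.integral_comp_sub_left (FF a 0) u]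
        norm_num
      rw [key t, key t', ← mul_sub, abs_mul, abs_of_nonneg (by positivity : (0:ℝ) ≤ (2 * a 1)⁻¹)]
      have hg := ff_integrable ha 0
      have hB : ∀ u, |FF a 0 u| ≤ (2 * a 0)⁻¹ := fun u => by
        rw [abs_of_nonneg (ff_nonneg ha 0 u)]; exact ff_le ha 0 u
      have hii : ∀ c d : ℝ, IntervalIntegrable (FF a 0) volume c d := fun c d =>
        hg.intervalIntegrable
      have h1' : (∫ u in (t-a 1)..(t+a 1), FF a 0 u)
          = (∫ u in (t-a 1)..(t'-a 1), FF a 0 u) + ∫ u in (t'-a 1)..(t+a 1), FF a 0 u :=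
        (intervalIntegral.integral_add_adjacent_intervals (hii _ _) (hii _ _)).symm
      have h2' : (∫ u in (t'-a 1)..(t'+a 1), FF a 0 u)
          = (∫ u in (t'-a 1)..(t+a 1), FF a 0 u) + ∫ u in (t+a 1)..(t'+a 1), FF a 0 u :=
        (intervalIntegral.integral_add_adjacent_intervals (hii _ _) (hii _ _)).symm
      have e1 : |∫ u in (t-a 1)..(t'-a 1), FF a 0 u| ≤ (2 * a 0)⁻¹ * |t - t'| := by
        have := intervalIntegral.norm_integral_le_of_norm_le_const (a := t-a 1) (b := t'-a 1)
          (C := (2 * a 0)⁻¹) (f := FF a 0) (fun x _ => by rw [Real.norm_eq_abs]; exact hB x)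
        rw [Real.norm_eq_abs] at this
        calc |∫ u in (t-a 1)..(t'-a 1), FF a 0 u| ≤ (2 * a 0)⁻¹ * |t'-a 1 - (t-a 1)| := this
          _ = (2 * a 0)⁻¹ * |t - t'| := by
              rw [show t'-a 1-(t-a 1) = -(t-t') by ring, abs_neg]
      have e2 : |∫ u in (t+a 1)..(t'+a 1), FF a 0 u| ≤ (2 * a 0)⁻¹ * |t - t'| := by
        have := intervalIntegral.norm_integral_le_of_norm_le_const (a := t+a 1) (b := t'+a 1)
          (C := (2 * a 0)⁻¹) (f := FF a 0) (fun x _ => by rw [Real.norm_eq_abs]; exact hB x)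
        rw [Real.norm_eq_abs] at this
        calc |∫ u in (t+a 1)..(t'+a 1), FF a 0 u| ≤ (2 * a 0)⁻¹ * |t'+a 1 - (t+a 1)| := this
          _ = (2 * a 0)⁻¹ * |t - t'| := by
              rw [show t'+a 1-(t+a 1) = -(t-t') by ring, abs_neg]
      calc (2 * a 1)⁻¹ * |(∫ u in (t-a 1)..(t+a 1), FF a 0 u) - ∫ u in (t'-a 1)..(t'+a 1), FF a 0 u|
          = (2 * a 1)⁻¹ * |(∫ u in (t-a 1)..(t'-a 1), FF a 0 u) - ∫ u in (t+a 1)..(t'+a 1), FF a 0 u| := by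
            rw [h1', h2']; ring_nf
        _ ≤ (2 * a 1)⁻¹ * (|∫ u in (t-a 1)..(t'-a 1), FF a 0 u| + |∫ u in (t+a 1)..(t'+a 1), FF a 0 u|) := by
            exact mul_le_mul_of_nonneg_left (abs_sub _ _) (by positivity)
        _ ≤ (2 * a 1)⁻¹ * ((2 * a 0)⁻¹ * |t - t'| + (2 * a 0)⁻¹ * |t - t'|) :=
            mul_le_mul_of_nonneg_left (add_le_add e1 e2) (by positivity)
        _ = KK a * |t - t'| := by unfold KK; ring
  | succ n ih =>
      have hpos : 0 < a (n+2) := ha _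
      show |(2 * a (n+2))⁻¹ * _ - (2 * a (n+2))⁻¹ * _| ≤ _
      rw [← mul_sub, abs_mul, abs_of_nonneg (by positivity : (0:ℝ) ≤ (2 * a (n+2))⁻¹)]
      have hint1 := ff_intOn ha (n+1) (-(a (n+2))) (a (n+2)) (fun s => t - s)
        (measurable_const.sub measurable_id)
      have hint2 := ff_intOn ha (n+1) (-(a (n+2))) (a (n+2)) (fun s => t' - s)
        (measurable_const.sub measurable_id)
      rw [← integral_sub hint1 hint2]
      have hbd : ‖∫ s in Set.Icc (-(a (n+2))) (a (n+2)), (FF a (n+1) (t - s) - FF a (n+1) (t' - s))‖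
          ≤ (KK a * |t - t'|) * (volume (Set.Icc (-(a (n+2))) (a (n+2)))).toReal := by
        refine norm_setIntegral_le_of_norm_le_const measure_Icc_lt_top ?_
        intro s _
        rw [Real.norm_eq_abs]
        have := ih (t - s) (t' - s)
        calc |FF a (n+1) (t-s) - FF a (n+1) (t'-s)| ≤ KK a * |t - s - (t' - s)| := this
          _ = KK a * |t - t'| := by rw [show t - s - (t' - s) = t - t' by ring]
      rw [Real.norm_eq_abs] at hbd
      have hvol : (volume (Set.Icc (-(a (n+2))) (a (n+2)))).toReal = 2 * a (n+2) := by
        rw [Real.volume_Icc, ENNReal.toReal_ofReal (by linarith)]; ring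
      rw [hvol] at hbd
      calc (2 * a (n+2))⁻¹ * |∫ s in Set.Icc (-(a (n+2))) (a (n+2)), (FF a (n+1) (t - s) - FF a (n+1) (t' - s))|
          ≤ (2 * a (n+2))⁻¹ * ((KK a * |t - t'|) * (2 * a (n+2))) :=
            mul_le_mul_of_nonneg_left hbd (by positivity)
        _ = KK a * |t - t'| := by field_simp

lemma ff_step (n : ℕ) (t : ℝ) :
    |FF a (n+2) t - FF a (n+1) t| ≤ KK a * a (n+2) := by
  have hpos : 0 < a (n+2) := ha _
  have hvol : (volume (Set.Icc (-(a (n+2))) (a (n+2)))).toReal = 2 * a (n+2) := by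
    rw [Real.volume_Icc, ENNReal.toReal_ofReal (by linarith)]; ring
  have hconst : FF a (n+1) t
      = (2 * a (n+2))⁻¹ * ∫ s in Set.Icc (-(a (n+2))) (a (n+2)), FF a (n+1) t := by
    rw [setIntegral_const, smul_eq_mul, measureReal_def, hvol]
    field_simp
  have hint1 := ff_intOn ha (n+1) (-(a (n+2))) (a (n+2)) (fun s => t - s)
    (measurable_const.sub measurable_id)
  have hint2 : IntegrableOn (fun _ : ℝ => FF a (n+1) t)
      (Set.Icc (-(a (n+2))) (a (n+2))) volume :=
    integrableOn_const measure_Icc_lt_top.ne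
  have key : FF a (n+2) t - FF a (n+1) t
      = (2 * a (n+2))⁻¹ * ∫ s in Set.Icc (-(a (n+2))) (a (n+2)),
          (FF a (n+1) (t - s) - FF a (n+1) t) := by
    rw [integral_sub hint1 hint2]
    rw [mul_sub]
    exact congrArg₂ (· - ·) rfl hconst.symm ▸ rfl
  rw [key, abs_mul, abs_of_nonneg (by positivity : (0:ℝ) ≤ (2 * a (n+2))⁻¹)]
  have hbd : ‖∫ s in Set.Icc (-(a (n+2))) (a (n+2)), (FF a (n+1) (t - s) - FF a (n+1) t)‖
      ≤ (KK a * a (n+2)) * (volume (Set.Icc (-(a (n+2))) (a (n+2)))).toReal := by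
    refine norm_setIntegral_le_of_norm_le_const measure_Icc_lt_top ?_
    intro s hs
    rw [Real.norm_eq_abs]
    have h1 := ff_lip ha n (t - s) t
    have hs' : |s| ≤ a (n+2) := abs_le.2 ⟨by linarith [hs.1], hs.2⟩
    have h2 : |t - s - t| = |s| := by rw [show t - s - t = -s by ring, abs_neg]
    have hK : 0 ≤ KK a := by
      unfold KK
      have := ha 0; have := ha 1; positivity
    calc |FF a (n+1) (t-s) - FF a (n+1) t| ≤ KK a * |t - s - t| := h1
      _ = KK a * |s| := by rw [h2]
      _ ≤ KK a * a (n+2) := mul_le_mul_of_nonneg_left hs' hK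
  rw [Real.norm_eq_abs, hvol] at hbd
  calc (2 * a (n+2))⁻¹ * |∫ s in Set.Icc (-(a (n+2))) (a (n+2)), (FF a (n+1) (t - s) - FF a (n+1) t)|
      ≤ (2 * a (n+2))⁻¹ * ((KK a * a (n+2)) * (2 * a (n+2))) :=
        mul_le_mul_of_nonneg_left hbd (by positivity)
    _ = KK a * a (n+2) := by field_simp


lemma ss_nonneg (n : ℕ) : 0 ≤ SS a n :=
  Finset.sum_nonneg fun k _ => (ha k).le

lemma ss_succ (n : ℕ) : SS a (n+1) = SS a n + a (n+1) := by
  simp [SS, Finset.sum_range_succ]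

lemma pp_succ (n : ℕ) (x : ℝ) : PP a (n+1) x = cc a (n+1) x * PP a n x := by
  have hb : 0 < a (n+1) := ha _
  have hB0 : 0 < a 0 := ha 0
  set b := a (n+1) with hbdef
  set T := SS a (n+1) with hTdef
  have hTss : T = SS a n + b := ss_succ ha n
  have hSnn : 0 ≤ SS a n := ss_nonneg ha n
  set I := Set.Icc (-b) b with hIdef
  set J := Set.Icc (-T) T with hJdef
  set f : ℝ → ℝ → ℂ := fun t s => (FF a n (t - s) : ℂ) * Complex.exp (Complex.I * t * x)
    with hfdef
  set G : ℝ → ℂ := fun t => ∫ s in I, f t s with hGdef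
  -- Step A
  have hA : PP a (n+1) x = (((2*b)⁻¹ : ℝ) : ℂ) * ∫ t : ℝ, G t := by
    rw [PP, ← integral_const_mul]
    refine congrArg (fun g : ℝ → ℂ => ∫ t : ℝ, g t) (funext fun t => ?_)
    show (FF a (n+1) t : ℂ) * Complex.exp (Complex.I * t * x) = _
    have h1 : (FF a (n+1) t : ℂ)
        = (((2*b)⁻¹ : ℝ) : ℂ) * ∫ s in I, ((FF a n (t - s) : ℝ) : ℂ) := by
      have h2 : (∫ s in I, ((FF a n (t - s) : ℝ) : ℂ))
          = ((∫ s in I, FF a n (t - s) : ℝ) : ℂ) := integral_ofReal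
      rw [h2]
      show ((((2 * b)⁻¹ : ℝ) * ∫ s in I, FF a n (t - s) : ℝ) : ℂ) = _
      push_cast
      ring
    rw [h1, mul_assoc]
    congr 1
    rw [← integral_mul_const]
  -- Step B : restrict to J
  have hGsupp : Function.support G ⊆ J := by
    intro t ht
    by_contra hmem
    refine ht ?_
    have habs : T < |t| := by
      simp only [hJdef, Set.mem_Icc, not_and_or, not_le] at hmem
      rcases abs_cases t with ⟨he, _⟩ | ⟨he, _⟩ <;> (rcases hmem with h | h <;> linarith)
    show (∫ s in I, f t s) = 0
    have : ∀ s ∈ I, f t s = 0 := by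
      intro s hs
      have hs' : |s| ≤ b := abs_le.2 ⟨by linarith [hs.1], hs.2⟩
      have : FF a n (t - s) = 0 := by
        refine ff_supp ha n _ ?_
        have := abs_sub_abs_le_abs_sub t s
        rw [hTss] at habs
        linarith
      simp [hfdef, this]
    rw [setIntegral_congr_fun measurableSet_Icc this]
    simp
  have hB : (∫ t : ℝ, G t) = ∫ t in J, G t := by
    rw [← integral_indicator measurableSet_Icc, Set.indicator_eq_self.2 hGsupp]
  -- Step C : Fubini
  haveI h1 : IsFiniteMeasure (volume.restrict J) :=
    ⟨by rw [Measure.restrict_apply_univ]; exact measure_Icc_lt_top⟩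
  haveI h2 : IsFiniteMeasure (volume.restrict I) :=
    ⟨by rw [Measure.restrict_apply_univ]; exact measure_Icc_lt_top⟩
  have hmeasf : AEStronglyMeasurable (Function.uncurry f)
      ((volume.restrict J).prod (volume.restrict I)) := by
    refine Measurable.aestronglyMeasurable ?_
    refine Measurable.mul ?_ ?_
    · exact Complex.measurable_ofReal.comp ((ff_meas n).comp (measurable_fst.sub measurable_snd))
    · exact Complex.measurable_exp.comp
        ((measurable_const.mul (Complex.measurable_ofReal.comp measurable_fst)).mul
          measurable_const)
  have hIntf : Integrable (Function.uncurry f) ((volume.restrict J).prod (volume.restrict I)) := by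
    refine Integrable.mono' (integrable_const ((2 * a 0)⁻¹)) hmeasf ?_
    filter_upwards with p
    rw [Function.uncurry_apply_pair, hfdef, norm_mul]
    have he : ‖Complex.exp (Complex.I * p.1 * x)‖ = 1 := by
      rw [Complex.norm_exp]
      simp [Complex.mul_re]
    rw [he, mul_one, Complex.norm_real, Real.norm_eq_abs,
      abs_of_nonneg (ff_nonneg ha n _)]
    exact ff_le ha n _
  have hC : (∫ t in J, G t) = ∫ s in I, ∫ t in J, f t s := by
    exact integral_integral_swap hIntf
  -- Step D : inner integral evaluation
  have hD : ∀ s ∈ I, (∫ t in J, f t s) = Complex.exp (Complex.I * s * x) * PP a n x := by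
    intro s hs
    have hs' : |s| ≤ b := abs_le.2 ⟨by linarith [hs.1], hs.2⟩
    have hsupp2 : Function.support (fun t => f t s) ⊆ J := by
      intro t ht
      by_contra hmem
      refine ht ?_
      have habs : T < |t| := by
        simp only [hJdef, Set.mem_Icc, not_and_or, not_le] at hmem
        rcases abs_cases t with ⟨he, _⟩ | ⟨he, _⟩ <;> (rcases hmem with h | h <;> linarith)
      have : FF a n (t - s) = 0 := by
        refine ff_supp ha n _ ?_
        have := abs_sub_abs_le_abs_sub t s
        rw [hTss] at habs
        linarith
      simp [hfdef, this]
    rw [← integral_indicator measurableSet_Icc, Set.indicator_eq_self.2 hsupp2]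
    have hptw : ∀ t : ℝ, f t s
        = ((FF a n (t - s) : ℂ) * Complex.exp (Complex.I * ((t - s : ℝ) : ℂ) * x))
            * Complex.exp (Complex.I * s * x) := by
      intro t
      show (FF a n (t - s) : ℂ) * Complex.exp (Complex.I * t * x) = _
      conv_rhs => rw [mul_assoc, ← Complex.exp_add]
      congr 2
      push_cast
      ring
    calc (∫ t : ℝ, f t s)
        = ∫ t : ℝ, ((FF a n (t - s) : ℂ) * Complex.exp (Complex.I * ((t - s : ℝ) : ℂ) * x))
            * Complex.exp (Complex.I * s * x) := by
          exact congrArg (fun g : ℝ → ℂ => ∫ t : ℝ, g t) (funext hptw)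
      _ = ∫ t : ℝ, ((FF a n t : ℂ) * Complex.exp (Complex.I * t * x))
            * Complex.exp (Complex.I * s * x) := by
          exact integral_sub_right_eq_self
            (fun u => ((FF a n u : ℂ) * Complex.exp (Complex.I * u * x))
              * Complex.exp (Complex.I * s * x)) s
      _ = Complex.exp (Complex.I * s * x) * PP a n x := by
          rw [integral_mul_const, PP, mul_comm]
  calc PP a (n+1) x = (((2*b)⁻¹ : ℝ) : ℂ) * ∫ t in J, G t := by rw [hA, hB]
    _ = (((2*b)⁻¹ : ℝ) : ℂ) * ∫ s in I, ∫ t in J, f t s := by rw [hC]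
    _ = (((2*b)⁻¹ : ℝ) : ℂ) * ∫ s in I, Complex.exp (Complex.I * s * x) * PP a n x := by
        rw [setIntegral_congr_fun measurableSet_Icc hD]
    _ = cc a (n+1) x * PP a n x := by
        rw [integral_mul_const, cc]
        ring

lemma pp_zero_eq (x : ℝ) : PP a 0 x = cc a 0 x := by
  have h0 : 0 < a 0 := ha 0
  rw [PP, cc]
  have : ∀ t : ℝ, (FF a 0 t : ℂ) * Complex.exp (Complex.I * t * x)
      = (Set.Icc (-(a 0)) (a 0)).indicator
          (fun t : ℝ => (((2 * a 0)⁻¹ : ℝ) : ℂ) * Complex.exp (Complex.I * t * x)) t := by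
    intro t
    by_cases hmem : t ∈ Set.Icc (-(a 0)) (a 0)
    · simp only [FF, Set.indicator_of_mem hmem]
    · simp only [FF, Set.indicator_of_notMem hmem]
      simp
  rw [congrArg (fun g : ℝ → ℂ => ∫ t : ℝ, g t) (funext this), integral_indicator measurableSet_Icc,
    integral_const_mul]

lemma pp_prod (n : ℕ) (x : ℝ) : PP a n x = ∏ k ∈ Finset.range (n+1), cc a k x := by
  induction n with
  | zero => simpa using pp_zero_eq ha x
  | succ n ih => rw [pp_succ ha n x, ih, mul_comm, ← Finset.prod_range_succ]

lemma vol_toReal (k : ℕ) : (volume (Set.Icc (-(a k)) (a k))).toReal = 2 * a k := by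
  have := ha k
  rw [Real.volume_Icc, ENNReal.toReal_ofReal (by linarith)]; ring

lemma exp_norm_one (s x : ℝ) : ‖Complex.exp (Complex.I * s * x)‖ = 1 := by
  rw [Complex.norm_exp]
  simp [Complex.mul_re]

lemma cc_norm_le_one (k : ℕ) (x : ℝ) : ‖cc a k x‖ ≤ 1 := by
  have hk := ha k
  rw [cc, norm_mul, Complex.norm_real, Real.norm_eq_abs, abs_of_nonneg (by positivity : (0:ℝ) ≤ (2 * a k)⁻¹)]
  have h1 : ‖∫ s in Set.Icc (-(a k)) (a k), Complex.exp (Complex.I * s * x)‖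
      ≤ 1 * (volume (Set.Icc (-(a k)) (a k))).toReal := by
    refine norm_setIntegral_le_of_norm_le_const measure_Icc_lt_top ?_
    · intro s _; rw [exp_norm_one ha]
  rw [vol_toReal ha k] at h1
  calc (2 * a k)⁻¹ * ‖∫ s in Set.Icc (-(a k)) (a k), Complex.exp (Complex.I * s * x)‖
      ≤ (2 * a k)⁻¹ * (1 * (2 * a k)) := mul_le_mul_of_nonneg_left h1 (by positivity)
    _ = 1 := by field_simp

lemma cc_zero (k : ℕ) : cc a k 0 = 1 := by
  have hk := ha k
  rw [cc]
  have : ∀ s ∈ Set.Icc (-(a k)) (a k), Complex.exp (Complex.I * s * (0:ℝ)) = 1 := by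
    intro s _; norm_num
  rw [setIntegral_congr_fun measurableSet_Icc this, setIntegral_const, measureReal_def, vol_toReal ha k,
    Complex.real_smul, mul_one, ← Complex.ofReal_mul]
  have hka : ((a k : ℝ) : ℂ) ≠ 0 := Complex.ofReal_ne_zero.2 (ne_of_gt hk)
  norm_num
  field_simp

lemma cc_norm_le_inv (k : ℕ) (x : ℝ) (hx : x ≠ 0) : ‖cc a k x‖ ≤ (a k * |x|)⁻¹ := by
  have hk := ha k
  have h1 : (∫ s in Set.Icc (-(a k)) (a k), Complex.exp (Complex.I * s * x))
      = ∫ s in (-(a k))..(a k), Complex.exp ((Complex.I * x) * s) := by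
    rw [MeasureTheory.integral_Icc_eq_integral_Ioc,
      ← intervalIntegral.integral_of_le (by linarith : -(a k) ≤ a k)]
    exact intervalIntegral.integral_congr fun s _ => congrArg Complex.exp (by ring)
  have hc : (Complex.I * x) ≠ 0 := mul_ne_zero Complex.I_ne_zero (Complex.ofReal_ne_zero.2 hx)
  have h2 : ‖∫ s in Set.Icc (-(a k)) (a k), Complex.exp (Complex.I * s * x)‖ ≤ 2 / |x| := by
    rw [h1, integral_exp_mul_complex hc, norm_div]
    have hre : ∀ r : ℝ, ‖Complex.exp (Complex.I * x * r)‖ = 1 := by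
      intro r
      rw [Complex.norm_exp]
      simp [Complex.mul_re]
    have hnum : ‖Complex.exp (Complex.I * x * (a k)) - Complex.exp (Complex.I * x * (-(a k) : ℝ))‖ ≤ 2 := by
      calc ‖_ - _‖ ≤ ‖Complex.exp (Complex.I * x * (a k))‖
            + ‖Complex.exp (Complex.I * x * (-(a k):ℝ))‖ := norm_sub_le _ _
        _ = 2 := by rw [hre, hre]; norm_num
    have hden : ‖Complex.I * (x:ℂ)‖ = |x| := by
      rw [norm_mul, Complex.norm_I, one_mul, Complex.norm_real, Real.norm_eq_abs]
    rw [hden]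
    gcongr
  have hxpos : 0 < |x| := abs_pos.2 hx
  rw [cc, norm_mul, Complex.norm_real, Real.norm_eq_abs,
    abs_of_nonneg (by positivity : (0:ℝ) ≤ (2 * a k)⁻¹)]
  calc (2 * a k)⁻¹ * ‖∫ s in Set.Icc (-(a k)) (a k), Complex.exp (Complex.I * s * x)‖
      ≤ (2 * a k)⁻¹ * (2 / |x|) := mul_le_mul_of_nonneg_left h2 (by positivity)
    _ = (a k * |x|)⁻¹ := by field_simp


noncomputable def Flim (a : ℕ → ℝ) : ℝ → ℝ := fun t => limUnder atTop (fun n => FF a (n+1) t)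

lemma ff_cauchy (hsum : Summable a) (t : ℝ) : CauchySeq (fun n => FF a (n+1) t) := by
  refine cauchySeq_of_dist_le_of_summable (fun n => KK a * a (n+2)) (fun n => ?_) ?_
  · rw [Real.dist_eq, abs_sub_comm]
    exact ff_step ha n t
  · have h2 : Summable (fun n => a (n+2)) := (summable_nat_add_iff 2).2 hsum
    exact h2.mul_left (KK a)

lemma flim_tendsto (hsum : Summable a) (t : ℝ) :
    Tendsto (fun n => FF a (n+1) t) atTop (𝓝 (Flim a t)) :=
  (ff_cauchy ha hsum t).tendsto_limUnder

end SubexpPW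

open SubexpPW

/-- For all `δ > 0` and `0 < β < 1` there is a function `ψ ∈ PW_{[−δ,δ]}` with `ψ(0) = 1`,
`|ψ| ≤ 1`, and `|ψ(x)| ≤ C e^{−|x|^β}`. -/
theorem exists_subexp_decay_pw (δ β : ℝ) (hδ : 0 < δ) (hβ0 : 0 < β) (hβ1 : β < 1) :
    ∃ C > (0 : ℝ), ∃ ψ : ℝ → ℂ,
      IsPaleyWiener (Set.Icc (-δ) δ) ψ ∧
      ψ 0 = 1 ∧
      (∀ x : ℝ, ‖ψ x‖ ≤ 1) ∧
      ∀ x : ℝ, ‖ψ x‖ ≤ C * Real.exp (-|x| ^ β) := by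
  classical
  -- choose parameters
  have hββ : β * β⁻¹ = 1 := mul_inv_cancel₀ (ne_of_gt hβ0)
  have hβinv : 1 < β⁻¹ := by nlinarith
  set p : ℝ := (1 + β⁻¹) / 2 with hpdef
  have hp1 : 1 < p := by rw [hpdef]; linarith
  have hp0 : 0 < p := lt_trans one_pos hp1
  have hpβ : β * p < 1 := by
    have hplt : p < β⁻¹ := by rw [hpdef]; linarith
    calc β * p < β * β⁻¹ := mul_lt_mul_of_pos_left hplt hβ0
      _ = 1 := hββ
  -- summable weights
  have hsum0 : Summable (fun n : ℕ => (((n : ℝ) + 1) ^ p)⁻¹) := by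
    have h1 : Summable (fun n : ℕ => (((n : ℝ)) ^ p)⁻¹) := Real.summable_nat_rpow_inv.2 hp1
    have h2 := (summable_nat_add_iff 1).2 h1
    refine h2.congr fun n => ?_
    push_cast
    ring_nf
  set Z : ℝ := ∑' n : ℕ, (((n : ℝ) + 1) ^ p)⁻¹ with hZdef
  have hZ1 : 1 ≤ Z := by
    have h0 : ((((0 : ℕ) : ℝ) + 1) ^ p)⁻¹ = 1 := by
      norm_num [Real.one_rpow]
    calc (1 : ℝ) = ((((0:ℕ):ℝ)+1)^p)⁻¹ := h0.symm
      _ ≤ Z := Summable.le_tsum hsum0 0 (fun k _ => by positivity)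
  have hZ0 : 0 < Z := lt_of_lt_of_le one_pos hZ1
  set A : ℝ := δ / Z with hAdef
  have hA0 : 0 < A := div_pos hδ hZ0
  set a : ℕ → ℝ := fun n => A * (((n : ℝ) + 1) ^ p)⁻¹ with hadef
  have ha : ∀ k, 0 < a k := fun k => by
    have h1 : (0:ℝ) < ((k:ℝ)+1)^p := Real.rpow_pos_of_pos (by positivity) _
    positivity
  have hsum : Summable a := hsum0.mul_left A
  have hanti : ∀ j k : ℕ, j ≤ k → a k ≤ a j := by
    intro j k hjk
    have hbase : ((j:ℝ)+1) ≤ ((k:ℝ)+1) := by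
      have : (j:ℝ) ≤ (k:ℝ) := Nat.cast_le.2 hjk
      linarith
    have h1 : ((j:ℝ)+1)^p ≤ ((k:ℝ)+1)^p := Real.rpow_le_rpow (by positivity) hbase hp0.le
    have h2 : (((k:ℝ)+1)^p)⁻¹ ≤ (((j:ℝ)+1)^p)⁻¹ :=
      inv_anti₀ (Real.rpow_pos_of_pos (by positivity) _) h1
    exact mul_le_mul_of_nonneg_left h2 hA0.le
  have hSS : ∀ n, SS a n ≤ δ := by
    intro n
    have hle : ∑ k ∈ Finset.range (n+1), (((k:ℝ)+1)^p)⁻¹ ≤ Z :=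
      Summable.sum_le_tsum _ (fun k _ => by positivity) hsum0
    calc SS a n = A * ∑ k ∈ Finset.range (n+1), (((k:ℝ)+1)^p)⁻¹ := by
          rw [SS, Finset.mul_sum]
      _ ≤ A * Z := mul_le_mul_of_nonneg_left hle hA0.le
      _ = δ := by rw [hAdef]; field_simp
  have habs : ∀ t : ℝ, t ∉ Set.Icc (-δ) δ → δ < |t| := by
    intro t ht
    simp only [Set.mem_Icc, not_and_or, not_le] at ht
    rcases abs_cases t with ⟨he, _⟩ | ⟨he, _⟩ <;> (rcases ht with h | h <;> linarith)
  -- the limiting density and the function ψ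
  set Fc : ℝ → ℂ := fun t => ((Flim a t : ℝ) : ℂ) with hFcdef
  set ψ : ℝ → ℂ := fun x => ∫ t in Set.Icc (-δ) δ, Fc t * Complex.exp (Complex.I * t * x)
    with hψdef
  have hflimT : ∀ t, Tendsto (fun n => FF a (n+1) t) atTop (𝓝 (Flim a t)) :=
    fun t => flim_tendsto ha hsum t
  have hflim_supp : ∀ t, δ < |t| → Flim a t = 0 := by
    intro t ht
    have h1 : ∀ n : ℕ, FF a (n+1) t = 0 := fun n =>
      ff_supp ha (n+1) t (lt_of_le_of_lt (hSS (n+1)) ht)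
    have h2 : Tendsto (fun n => FF a (n+1) t) atTop (𝓝 0) := by
      simp only [h1]; exact tendsto_const_nhds
    exact tendsto_nhds_unique (hflimT t) h2
  have hflim_le : ∀ t, |Flim a t| ≤ (2 * a 0)⁻¹ := by
    intro t
    refine le_of_tendsto (hflimT t).abs ?_
    filter_upwards with n
    rw [abs_of_nonneg (ff_nonneg ha (n+1) t)]
    exact ff_le ha (n+1) t
  have hKnn : 0 ≤ KK a := by
    have h0 := ha 0; have h1 := ha 1
    unfold KK; positivity
  have hlip : ∀ t t', dist (Flim a t) (Flim a t') ≤ KK a * dist t t' := by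
    intro t t'
    rw [Real.dist_eq, Real.dist_eq]
    refine le_of_tendsto ((hflimT t).sub (hflimT t')).abs ?_
    filter_upwards with n using ff_lip ha n t t'
  have hflim_cont : Continuous (Flim a) :=
    (LipschitzWith.of_dist_le_mul (K := (KK a).toNNReal) (fun t t' => by
      rw [Real.coe_toNNReal _ hKnn]; exact hlip t t')).continuous
  -- convergence of PP to ψ
  have hPPint : ∀ (x : ℝ) (n : ℕ),
      (∫ t in Set.Icc (-δ) δ, ((FF a (n+1) t : ℝ) : ℂ) * Complex.exp (Complex.I * t * x))
        = PP a (n+1) x := by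
    intro x n
    rw [PP, ← integral_indicator measurableSet_Icc, Set.indicator_eq_self.2 ?_]
    intro t ht
    by_contra hmem
    have h1 : δ < |t| := habs t hmem
    have h2 : FF a (n+1) t = 0 := ff_supp ha (n+1) t (lt_of_le_of_lt (hSS (n+1)) h1)
    refine ht ?_
    simp [h2]
  have htendψ : ∀ x : ℝ, Tendsto (fun n => PP a (n+1) x) atTop (𝓝 (ψ x)) := by
    intro x
    have hdom := tendsto_integral_of_dominated_convergence
      (μ := volume.restrict (Set.Icc (-δ) δ))
      (F := fun (n : ℕ) (t : ℝ) => ((FF a (n+1) t : ℝ) : ℂ) * Complex.exp (Complex.I * t * x))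
      (f := fun t => Fc t * Complex.exp (Complex.I * t * x))
      (bound := fun _ => (2 * a 0)⁻¹)
      (fun n => by
        refine Measurable.aestronglyMeasurable ?_
        exact (Complex.measurable_ofReal.comp (ff_meas (n+1))).mul
          (Complex.measurable_exp.comp
            ((measurable_const.mul (Complex.measurable_ofReal.comp measurable_id)).mul
              measurable_const)))
      (integrableOn_const measure_Icc_lt_top.ne)
      (fun n => by
        filter_upwards with t
        rw [norm_mul, exp_norm_one ha, mul_one, Complex.norm_real, Real.norm_eq_abs,
          abs_of_nonneg (ff_nonneg ha (n+1) t)]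
        exact ff_le ha (n+1) t)
      (by
        filter_upwards with t
        exact ((Complex.continuous_ofReal.tendsto _).comp (hflimT t)).mul_const _)
    exact hdom.congr (fun n => hPPint x n)
  -- ψ(0) = 1
  have hψ0 : ψ 0 = 1 := by
    have h1 : ∀ n : ℕ, PP a (n+1) (0:ℝ) = 1 := fun n => by
      rw [pp_prod ha]
      exact Finset.prod_eq_one fun k _ => cc_zero ha k
    have h2 : Tendsto (fun n => PP a (n+1) (0:ℝ)) atTop (𝓝 1) := by
      simp only [h1]; exact tendsto_const_nhds
    exact tendsto_nhds_unique (htendψ 0) h2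
  -- |ψ| ≤ 1
  have hψle1 : ∀ x : ℝ, ‖ψ x‖ ≤ 1 := by
    intro x
    refine le_of_tendsto (htendψ x).norm ?_
    filter_upwards with n
    rw [pp_prod ha, norm_prod]
    exact Finset.prod_le_one (fun k _ => norm_nonneg _) (fun k _ => cc_norm_le_one ha k x)
  -- Paley–Wiener membership
  have hPW : IsPaleyWiener (Set.Icc (-δ) δ) ψ := by
    refine ⟨Fc, ?_, ?_, fun x => rfl⟩
    · have hg : MemLp ((Set.Icc (-δ) δ).indicator (fun _ => ((2 * a 0)⁻¹ : ℝ))) 2 volume :=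
        memLp_indicator_const 2 measurableSet_Icc _ (Or.inr (ne_of_lt measure_Icc_lt_top))
      refine MemLp.of_le hg
        (Complex.continuous_ofReal.comp hflim_cont).aestronglyMeasurable ?_
      filter_upwards with t
      by_cases hmem : t ∈ Set.Icc (-δ) δ
      · rw [Set.indicator_of_mem hmem]
        rw [Complex.norm_real, Real.norm_eq_abs, Real.norm_eq_abs]
        have h0 := ha 0
        rw [abs_of_nonneg (by positivity : (0:ℝ) ≤ (2 * a 0)⁻¹)]
        exact hflim_le t
      · have h1 : Flim a t = 0 := hflim_supp t (habs t hmem)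
        rw [hFcdef]
        simp [h1]
    · intro t ht
      have h1 : Flim a t = 0 := hflim_supp t (habs t ht)
      rw [hFcdef]
      simp [h1]
  -- decay constants
  set q : ℝ := 1 - β * p with hqdef
  have hq0 : 0 < q := by rw [hqdef]; linarith
  have h3p : (0:ℝ) < 3 ^ p := Real.rpow_pos_of_pos (by norm_num) _
  set c0 : ℝ := 3 ^ p * Real.exp 1 / A with hc0def
  have hc0pos : 0 < c0 := by positivity
  set X0 : ℝ := max 1 (c0 ^ (1/q)) with hX0def
  have hX0ge1 : (1:ℝ) ≤ X0 := le_max_left _ _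
  set C : ℝ := Real.exp (X0 ^ β) with hCdef
  have hC1 : (1:ℝ) ≤ C := Real.one_le_exp (Real.rpow_nonneg (by linarith) _)
  refine ⟨C, by positivity, ψ, hPW, hψ0, hψle1, ?_⟩
  intro x
  by_cases hcase : |x| < X0
  · -- small |x|
    have h1 : |x| ^ β ≤ X0 ^ β := Real.rpow_le_rpow (abs_nonneg x) hcase.le hβ0.le
    calc ‖ψ x‖ ≤ 1 := hψle1 x
      _ ≤ C * Real.exp (-|x| ^ β) := by
          rw [hCdef, ← Real.exp_add]
          exact Real.one_le_exp (by linarith)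
  · push_neg at hcase
    set r : ℝ := |x| with hrdef
    have hr1 : 1 ≤ r := le_trans hX0ge1 hcase
    have hrpos : 0 < r := lt_of_lt_of_le one_pos hr1
    have hx0 : x ≠ 0 := by
      intro h
      rw [hrdef, h] at hrpos
      simp at hrpos
    have hrβ1 : 1 ≤ r ^ β := by
      calc (1:ℝ) = 1 ^ β := (Real.one_rpow β).symm
        _ ≤ r ^ β := Real.rpow_le_rpow zero_le_one hr1 hβ0.le
    set m : ℕ := ⌈r ^ β⌉₊ with hmdef
    have hm1 : r ^ β ≤ (m : ℝ) := Nat.le_ceil _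
    have hm2 : (m : ℝ) + 1 ≤ 3 * r ^ β := by
      have := Nat.ceil_lt_add_one (by positivity : (0:ℝ) ≤ r ^ β)
      rw [← hmdef] at this
      linarith
  -- a m * r ≥ e
    have hamr : Real.exp 1 ≤ a m * r := by
      have h3 : ((m:ℝ)+1) ^ p ≤ (3 * r ^ β) ^ p :=
        Real.rpow_le_rpow (by positivity) hm2 hp0.le
      have h4 : (3 * r ^ β) ^ p = 3 ^ p * r ^ (β * p) := by
        rw [Real.mul_rpow (by norm_num) (by positivity), ← Real.rpow_mul (abs_nonneg x)]
      have h5 : 0 < ((m:ℝ)+1) ^ p := Real.rpow_pos_of_pos (by positivity) _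
      have h6 : (3 ^ p * r ^ (β * p))⁻¹ ≤ (((m:ℝ)+1) ^ p)⁻¹ :=
        inv_anti₀ h5 (h4 ▸ h3)
      have h7 : A * (3 ^ p * r ^ (β * p))⁻¹ * r ≤ a m * r := by
        refine mul_le_mul_of_nonneg_right ?_ (abs_nonneg x)
        exact mul_le_mul_of_nonneg_left h6 hA0.le
      have h8 : A * (3 ^ p * r ^ (β * p))⁻¹ * r = (A / 3 ^ p) * r ^ q := by
        have hrq : r ^ q = r / r ^ (β * p) := by
          rw [hqdef, Real.rpow_sub hrpos, Real.rpow_one]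
        rw [hrq]
        have hrbp : (0:ℝ) < r ^ (β * p) := Real.rpow_pos_of_pos hrpos _
        field_simp
      have h9 : Real.exp 1 ≤ (A / 3 ^ p) * r ^ q := by
        have hble : c0 ^ (1/q) ≤ r := le_trans (le_max_right _ _) hcase
        have hrq : c0 ≤ r ^ q := by
          calc c0 = c0 ^ ((1/q) * q) := by
                rw [one_div_mul_cancel (ne_of_gt hq0), Real.rpow_one]
            _ = (c0 ^ (1/q)) ^ q := Real.rpow_mul hc0pos.le _ _
            _ ≤ r ^ q := Real.rpow_le_rpow (Real.rpow_nonneg hc0pos.le _) hble hq0.le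
        calc Real.exp 1 = (A / 3 ^ p) * c0 := by
              rw [hc0def]; field_simp
          _ ≤ (A / 3 ^ p) * r ^ q := mul_le_mul_of_nonneg_left hrq (by positivity)
      linarith [h7, h8 ▸ h9]
    have hexp1 : (1:ℝ) ≤ Real.exp 1 := Real.one_le_exp zero_le_one
    have hamr1 : (1:ℝ) ≤ a m * r := le_trans hexp1 hamr
    have hamrpos : (0:ℝ) < a m * r := lt_of_lt_of_le one_pos hamr1
    -- product bound
    have hbound : ∀ n, m ≤ n → ‖PP a (n+1) x‖ ≤ ((a m * r)⁻¹) ^ (m+1) := by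
      intro n hn
      rw [pp_prod ha, norm_prod]
      rw [← Finset.prod_range_mul_prod_Ico (fun k => ‖cc a k x‖) (by omega : m+1 ≤ n+2)]
      have hA1 : ∏ k ∈ Finset.range (m+1), ‖cc a k x‖ ≤ ((a m * r)⁻¹) ^ (m+1) := by
        have hstep : ∏ k ∈ Finset.range (m+1), ‖cc a k x‖
            ≤ ∏ _k ∈ Finset.range (m+1), (a m * r)⁻¹ := by
          refine Finset.prod_le_prod (fun k _ => norm_nonneg _) (fun k hk => ?_)
          refine le_trans (cc_norm_le_inv ha k x hx0) ?_
          have hk' : k ≤ m := by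
            have := Finset.mem_range.1 hk; omega
          have h1 : a m ≤ a k := hanti k m hk'
          have h2 : a m * r ≤ a k * r :=
            mul_le_mul_of_nonneg_right h1 (abs_nonneg x)
          exact inv_anti₀ hamrpos h2
        rw [Finset.prod_const, Finset.card_range] at hstep
        exact hstep
      have hA2 : ∏ k ∈ Finset.Ico (m+1) (n+2), ‖cc a k x‖ ≤ 1 :=
        Finset.prod_le_one (fun k _ => norm_nonneg _) (fun k _ => cc_norm_le_one ha k x)
      calc (∏ k ∈ Finset.range (m+1), ‖cc a k x‖) * ∏ k ∈ Finset.Ico (m+1) (n+2), ‖cc a k x‖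
          ≤ ((a m * r)⁻¹) ^ (m+1) * 1 := by
            refine mul_le_mul hA1 hA2 (Finset.prod_nonneg fun k _ => norm_nonneg _) (by positivity)
        _ = ((a m * r)⁻¹) ^ (m+1) := mul_one _
    have hψb : ‖ψ x‖ ≤ ((a m * r)⁻¹) ^ (m+1) :=
      le_of_tendsto (htendψ x).norm (eventually_atTop.2 ⟨m, hbound⟩)
    have hinv : (a m * r)⁻¹ ≤ Real.exp (-1) := by
      rw [Real.exp_neg]
      exact inv_anti₀ (lt_of_lt_of_le one_pos hexp1) hamr
    calc ‖ψ x‖ ≤ ((a m * r)⁻¹) ^ (m+1) := hψb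
      _ ≤ (Real.exp (-1)) ^ (m+1) := pow_le_pow_left₀ (by positivity) hinv _
      _ = Real.exp (-((m:ℝ)+1)) := by
          rw [← Real.exp_nat_mul]
          congr 1
          push_cast
          ring
      _ ≤ Real.exp (-(r ^ β)) := Real.exp_le_exp.2 (by linarith)
      _ ≤ C * Real.exp (-(r ^ β)) := le_mul_of_one_le_left (Real.exp_nonneg _) hC1
end
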